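/- Let X be an SFT of radius r_X and F, G sliding-block codes with F : Σ_X^{ℤ^d} → Σ_Y^{ℤ^d} and G : Σ_Y^{ℤ^d} → Σ_X^{ℤ^d}. If for some k > r_{F'} + r_{G'} every admissible k-block b of X satisfies (G ∘ F)(b)(0) = b(0) in the star-tracking semantics (i.e., no forbidden pattern or star is encountered and the value at the origin is preserved), then G ∘ F restricted to X is the identity on X and F(X) ⊆ Y. Conversely, if there exists x ∈ X with (G∘F)(x) ≠ x or F(x) ∉ Y, then for every k there is an admissible k-block witnessing the failure at its center. -/

import Mathlib

open Filter Topology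

/-- Positions: `ℤ^d`. -/
abbrev Zd (d : ℕ) : Type := Fin d → ℤ

/-- Configurations: maps `ℤ^d → A`. -/
abbrev Config (d : ℕ) (A : Type*) : Type _ := Zd d → A

/-- The block `[-r,r]^d` in `ℤ^d`. -/
noncomputable def ball (d r : ℕ) : Finset (Zd d) :=
  Fintype.piFinset fun _ => Finset.Icc (-(r : ℤ)) (r : ℤ)

/-- A pattern: a finite support together with a symbol at each position. -/
structure Pattern (d : ℕ) (A : Type*) where
  supp : Finset (Zd d)
  val : Zd d → A

variable {d : ℕ} {A B : Type*}

/-- The pattern `p` occurs in the configuration `x` at position `z`. -/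
def Pattern.OccursAt (p : Pattern d A) (x : Config d A) (z : Zd d) : Prop :=
  ∀ v ∈ p.supp, x (z + v) = p.val v

/-- The pattern `q` occurs inside the pattern `p` at position `z`. -/
def Pattern.OccursIn (q p : Pattern d A) (z : Zd d) : Prop :=
  ∀ v ∈ q.supp, z + v ∈ p.supp ∧ p.val (z + v) = q.val v

/-- The subshift defined by the set `F` of forbidden patterns. -/
def xF (F : Set (Pattern d A)) : Set (Config d A) :=
  {x | ∀ z : Zd d, ∀ p ∈ F, ¬ p.OccursAt x z}

/-- A pattern is admissible if no forbidden pattern occurs inside it. -/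
def Admissible (F : Set (Pattern d A)) (p : Pattern d A) : Prop :=
  ∀ z : Zd d, ∀ q ∈ F, ¬ q.OccursIn p z

/-- A pattern is extensible if it occurs in some configuration of the subshift. -/
def Extensible (F : Set (Pattern d A)) (p : Pattern d A) : Prop :=
  ∃ x ∈ xF F, ∃ z : Zd d, p.OccursAt x z

/-- The shift map by `v`. -/
def shift (v : Zd d) (x : Config d A) : Config d A := fun z => x (z + v)

/-- `f` is a local rule of radius `r`: it only depends on coordinates in `[-r,r]^d`. -/
def IsLocal (r : ℕ) (f : Config d A → B) : Prop :=
  ∀ u u' : Config d A, (∀ v ∈ ball d r, u v = u' v) → f u = f u'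

/-- The global sliding-block code induced by the local rule `f`. -/
def sliding (f : Config d A → B) : Config d A → Config d B :=
  fun x z => f fun v => x (z + v)

open Classical in
/-- The star-tracking version of a local rule: it applies `f` if its window of radius
`R` contains neither a `⋆` (i.e. `none`) nor a forbidden pattern of `F`, and outputs
`⋆` otherwise. -/
noncomputable def starMap [Inhabited A] (F : Set (Pattern d A)) (f : Config d A → B)
    (R : ℕ) : Config d (Option A) → Option B :=
  fun u =>
    if (∀ v ∈ ball d R, u v ≠ none) ∧
        (∀ z : Zd d, ∀ p ∈ F, ¬ ∀ v ∈ p.supp, z + v ∈ ball d R ∧ u (z + v) = some (p.val v))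
    then some (f fun v => (u v).getD default)
    else none

/-- Embed a `k`-block as a starred configuration: `⋆` outside the block. -/
noncomputable def starEmbed (k : ℕ) (b : Pattern d A) : Config d (Option A) :=
  fun v => if v ∈ ball d k then some (b.val v) else none

section Aux

lemma mem_ball_iff {d r : ℕ} {z : Zd d} :
    z ∈ ball d r ↔ ∀ i, -(r : ℤ) ≤ z i ∧ z i ≤ (r : ℤ) := by
  simp [ball, Fintype.mem_piFinset, Finset.mem_Icc]

lemma ball_mono {d r r' : ℕ} (h : r ≤ r') : ball d r ⊆ ball d r' := by
  intro z hz
  rw [mem_ball_iff] at *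
  intro i
  have := hz i
  have : (r : ℤ) ≤ (r' : ℤ) := by exact_mod_cast h
  have h2 := hz i
  omega

lemma add_mem_ball {d k r1 r2 : ℕ} (hk : r1 + r2 ≤ k) {v w : Zd d}
    (hv : v ∈ ball d r1) (hw : w ∈ ball d r2) : v + w ∈ ball d k := by
  rw [mem_ball_iff] at *
  intro i
  have h1 := hv i
  have h2 := hw i
  have : (r1 : ℤ) + (r2 : ℤ) ≤ (k : ℤ) := by exact_mod_cast hk
  simp only [Pi.add_apply]
  omega

variable {d : ℕ} {A B : Type} [Inhabited A] [Inhabited B]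
variable {FX : Set (Pattern d A)} {FY : Set (Pattern d B)}
variable {f : Config d A → B} {g : Config d B → A}

/-- The `k`-block of `x` based at `z`. -/
noncomputable def blockAt (x : Config d A) (k : ℕ) (z : Zd d) : Pattern d A :=
  ⟨ball d k, fun w => x (z + w)⟩

lemma adm_blockAt {x : Config d A} (hx : x ∈ xF FX) (k : ℕ) (z : Zd d) :
    Admissible FX (blockAt x k z) := by
  intro z' q hq hocc
  apply hx (z + z') q hq
  intro w hw
  have h2 := (hocc w hw).2
  calc x ((z + z') + w) = x (z + (z' + w)) := by rw [add_assoc]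
  _ = q.val w := h2

lemma starEmbed_blockAt (x : Config d A) (k : ℕ) (z v : Zd d) :
    starEmbed k (blockAt x k z) v
      = if v ∈ ball d k then some (x (z + v)) else none := rfl

lemma stage1_some {rF rX k : ℕ} (hf : IsLocal rF f) {x : Config d A} (hx : x ∈ xF FX)
    (z v : Zd d) (hv : ∀ w ∈ ball d (max rF rX), v + w ∈ ball d k) :
    sliding (starMap FX f (max rF rX)) (starEmbed k (blockAt x k z)) v
      = some (sliding f x (z + v)) := by
  show starMap FX f (max rF rX) (fun w => starEmbed k (blockAt x k z) (v + w)) = _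
  rw [starMap]
  rw [if_pos]
  · apply congrArg some
    apply hf
    intro w hw
    have hw1 : w ∈ ball d (max rF rX) := ball_mono (le_max_left _ _) hw
    have hvk := hv w hw1
    rw [starEmbed_blockAt, if_pos hvk]
    show x (z + (v + w)) = x ((z + v) + w)
    rw [add_assoc]
  · constructor
    · intro w hw
      have hvk := hv w hw
      rw [starEmbed_blockAt, if_pos hvk]
      exact Option.some_ne_none _
    · intro z' p hp hocc
      apply hx (z + v + z') p hp
      intro w hw
      obtain ⟨h1, h2⟩ := hocc w hw
      have hvk := hv (z' + w) h1
      rw [starEmbed_blockAt, if_pos hvk] at h2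
      have h3 : x (z + (v + (z' + w))) = p.val w := Option.some.inj h2
      calc x ((z + v + z') + w) = x (z + (v + (z' + w))) := by
            congr 1; abel
      _ = p.val w := h3

lemma stage1_none {rF rX k : ℕ} {x : Config d A}
    (z v : Zd d) (hv : ∃ w ∈ ball d (max rF rX), v + w ∉ ball d k) :
    sliding (starMap FX f (max rF rX)) (starEmbed k (blockAt x k z)) v = none := by
  show starMap FX f (max rF rX) (fun w => starEmbed k (blockAt x k z) (v + w)) = _
  rw [starMap, if_neg]
  rintro ⟨h1, -⟩
  obtain ⟨w, hw, hwk⟩ := hv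
  apply h1 w hw
  rw [starEmbed_blockAt, if_neg hwk]

lemma comp_eq (rF rX rG rY k : ℕ) (x : Config d A) (z : Zd d) :
    sliding (starMap FY g (max rG rY))
        (sliding (starMap FX f (max rF rX)) (starEmbed k (blockAt x k z))) 0
      = starMap FY g (max rG rY)
          (sliding (starMap FX f (max rF rX)) (starEmbed k (blockAt x k z))) := by
  show starMap FY g (max rG rY) (fun w =>
      sliding (starMap FX f (max rF rX)) (starEmbed k (blockAt x k z)) (0 + w)) = _
  congr 1
  funext w
  rw [zero_add]

lemma comp_some {rF rX rG rY k : ℕ} (hf : IsLocal rF f) (hg : IsLocal rG g)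
    {x : Config d A} (hx : x ∈ xF FX) (hy : sliding f x ∈ xF FY) (z : Zd d)
    (hwin : ∀ v ∈ ball d (max rG rY), ∀ w ∈ ball d (max rF rX), v + w ∈ ball d k) :
    sliding (starMap FY g (max rG rY))
        (sliding (starMap FX f (max rF rX)) (starEmbed k (blockAt x k z))) 0
      = some (sliding g (sliding f x) z) := by
  rw [comp_eq rF rX rG rY k x z, starMap, if_pos]
  · apply congrArg some
    apply hg
    intro w hw
    have hw2 : w ∈ ball d (max rG rY) := ball_mono (le_max_left _ _) hw
    rw [stage1_some hf hx z w (hwin w hw2)]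
    rfl
  · constructor
    · intro v hv
      rw [stage1_some hf hx z v (hwin v hv)]
      exact Option.some_ne_none _
    · intro z' p hp hocc
      apply hy (z + z') p hp
      intro w hw
      obtain ⟨h1, h2⟩ := hocc w hw
      rw [stage1_some hf hx z (z' + w) (hwin _ h1)] at h2
      have h3 : sliding f x (z + (z' + w)) = p.val w := Option.some.inj h2
      calc sliding f x ((z + z') + w) = sliding f x (z + (z' + w)) := by rw [add_assoc]
      _ = p.val w := h3

lemma comp_none_Y {rF rX rG rY k : ℕ} (hf : IsLocal rF f)
    {x : Config d A} (hx : x ∈ xF FX) {p : Pattern d B} (hp : p ∈ FY)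
    (hps : p.supp ⊆ ball d (max rG rY)) (z : Zd d)
    (hocc : p.OccursAt (sliding f x) z)
    (hwin : ∀ v ∈ ball d (max rG rY), ∀ w ∈ ball d (max rF rX), v + w ∈ ball d k) :
    sliding (starMap FY g (max rG rY))
        (sliding (starMap FX f (max rF rX)) (starEmbed k (blockAt x k z))) 0
      = none := by
  rw [comp_eq rF rX rG rY k x z, starMap, if_neg]
  rintro ⟨-, h2⟩
  apply h2 0 p hp
  intro w hw
  have hw2 : w ∈ ball d (max rG rY) := hps hw
  rw [zero_add]
  refine ⟨hw2, ?_⟩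
  rw [stage1_some hf hx z w (hwin w hw2)]
  exact congrArg some (hocc w hw)

lemma comp_none_small {rF rX rG rY k : ℕ}
    {x : Config d A} (z : Zd d)
    (hvw : ∃ v ∈ ball d (max rG rY), ∃ w ∈ ball d (max rF rX), v + w ∉ ball d k) :
    sliding (starMap FY g (max rG rY))
        (sliding (starMap FX f (max rF rX)) (starEmbed k (blockAt x k z))) 0
      = none := by
  rw [comp_eq rF rX rG rY k x z, starMap, if_neg]
  rintro ⟨h1, -⟩
  obtain ⟨v, hv, hw⟩ := hvw
  apply h1 v hv
  exact stage1_none (FX := FX) (f := f) z v hw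

end Aux

/-- The star-tracking criterion for conjugacy-type checks: if for some
`k > r_{F'} + r_{G'}` every admissible `k`-block `b` of `X` satisfies
`(G' ∘ F')(b)(0) = b(0)`, then `G ∘ F` is the identity on `X` and `F(X) ⊆ Y`;
conversely, if this fails globally, then every size `k` admits an admissible
`k`-block witnessing the failure at its center. -/
theorem stmt8 (d : ℕ) (A B : Type) [Finite A] [Finite B] [Inhabited A] [Inhabited B]
    (FX : Set (Pattern d A)) (hFX : FX.Finite) (FY : Set (Pattern d B)) (hFY : FY.Finite)
    (rX rY : ℕ) (hrX : ∀ p ∈ FX, p.supp ⊆ ball d rX) (hrY : ∀ q ∈ FY, q.supp ⊆ ball d rY)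
    (rF : ℕ) (f : Config d A → B) (hf : IsLocal rF f)
    (rG : ℕ) (g : Config d B → A) (hg : IsLocal rG g) :
    ((∃ k : ℕ, max rF rX + max rG rY < k ∧
        ∀ b : Pattern d A, b.supp = ball d k → Admissible FX b →
          sliding (starMap FY g (max rG rY))
              (sliding (starMap FX f (max rF rX)) (starEmbed k b)) 0
            = some (b.val 0)) →
      (∀ x ∈ xF FX, sliding g (sliding f x) = x) ∧ sliding f '' xF FX ⊆ xF FY) ∧
    ((∃ x ∈ xF FX, sliding g (sliding f x) ≠ x ∨ sliding f x ∉ xF FY) →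
      ∀ k : ℕ, ∃ b : Pattern d A, b.supp = ball d k ∧ Admissible FX b ∧
        sliding (starMap FY g (max rG rY))
            (sliding (starMap FX f (max rF rX)) (starEmbed k b)) 0
          ≠ some (b.val 0)) := by
  constructor
  · rintro ⟨k, hk, hall⟩
    have hwin : ∀ v ∈ ball d (max rG rY), ∀ w ∈ ball d (max rF rX), v + w ∈ ball d k := by
      intro v hv w hw
      exact add_mem_ball (by omega) hv hw
    have key : ∀ x ∈ xF FX, sliding f x ∈ xF FY := by
      intro x hx z p hp hocc
      have h1 := hall (blockAt x k z) rfl (adm_blockAt hx k z)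
      rw [comp_none_Y hf hx hp (hrY p hp |>.trans (ball_mono (le_max_right _ _))) z hocc hwin] at h1
      exact Option.some_ne_none _ h1.symm
    refine ⟨fun x hx => ?_, ?_⟩
    · funext z
      have h1 := hall (blockAt x k z) rfl (adm_blockAt hx k z)
      rw [comp_some hf hg hx (key x hx) z hwin] at h1
      have h2 : sliding g (sliding f x) z = x (z + 0) := Option.some.inj h1
      rw [h2, add_zero]
    · rintro y ⟨x, hx, rfl⟩
      exact key x hx
  · rintro ⟨x, hx, hfail⟩ k
    by_cases hwin : ∀ v ∈ ball d (max rG rY), ∀ w ∈ ball d (max rF rX), v + w ∈ ball d k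
    · by_cases hy : sliding f x ∈ xF FY
      · rcases hfail with hne | hny
        · obtain ⟨z, hz⟩ := Function.ne_iff.mp hne
          refine ⟨blockAt x k z, rfl, adm_blockAt hx k z, ?_⟩
          rw [comp_some hf hg hx hy z hwin]
          intro h
          apply hz
          have h2 : sliding g (sliding f x) z = x (z + 0) := Option.some.inj h
          rw [h2, add_zero]
        · exact absurd hy hny
      · have : ∃ z : Zd d, ∃ p ∈ FY, p.OccursAt (sliding f x) z := by
          by_contra hc
          push_neg at hc
          exact hy fun z p hp => hc z p hp
        obtain ⟨z, p, hp, hocc⟩ := this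
        refine ⟨blockAt x k z, rfl, adm_blockAt hx k z, ?_⟩
        rw [comp_none_Y hf hx hp (hrY p hp |>.trans (ball_mono (le_max_right _ _))) z hocc hwin]
        exact fun h => Option.some_ne_none _ h.symm
    · push_neg at hwin
      obtain ⟨v, hv, w, hw, hvw⟩ := hwin
      refine ⟨blockAt x k 0, rfl, adm_blockAt hx k 0, ?_⟩
      rw [comp_none_small (FX := FX) (FY := FY) (f := f) (g := g) 0 ⟨v, hv, w, hw, hvw⟩]
      exact fun h => Option.some_ne_none _ h.symm
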